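/- If a family of nonnegative random variables S_η satisfies E[S_η] = 1/μ for all η and, for all x ≥ x₀ (some x₀ > 0), P(S_η > x) → 0 and E[S_η·1{S_η ≤ x}] → 0 as η → η*, then E[S_η²] → +∞ as η → η*. -/
import Mathlib


open MeasureTheory ProbabilityTheory Set Filter

/-- If a family of nonnegative random variables `S_η` has
`E[S_η] = 1/μ` and, for all `x ≥ x₀` (some `x₀ > 0`), `P(S_η > x) → 0` and
`E[S_η·1{S_η ≤ x}] → 0` as `η → η*`, then `E[S_η²] → +∞` as `η → η*`. -/
theorem second_moment_tendsto_top {Ω : Type*} [MeasureSpace Ω]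
    [IsProbabilityMeasure (ℙ : Measure Ω)]
    {ι : Type*} [TopologicalSpace ι] (ηstar : ι)
    (m : ℝ) (hm : 0 < m)
    (S : ι → Ω → ℝ)
    (hmeas : ∀ η, Measurable (S η))
    (hnonneg : ∀ η ω, 0 ≤ S η ω)
    (hint : ∀ η, Integrable (S η) (ℙ : Measure Ω))
    (hmean : ∀ η, ∫ ω, S η ω ∂(ℙ : Measure Ω) = 1 / m)
    (x₀ : ℝ) (hx₀ : 0 < x₀)
    (htail : ∀ x, x₀ ≤ x →
      Tendsto (fun η => ((ℙ : Measure Ω) {ω : Ω | x < S η ω}).toReal)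
        (nhdsWithin ηstar {ηstar}ᶜ) (nhds 0))
    (htrunc : ∀ x, x₀ ≤ x →
      Tendsto (fun η => ∫ ω in {ω : Ω | S η ω ≤ x}, S η ω ∂(ℙ : Measure Ω))
        (nhdsWithin ηstar {ηstar}ᶜ) (nhds 0)) :
    Tendsto (fun η => ∫⁻ ω, ENNReal.ofReal ((S η ω) ^ 2) ∂(ℙ : Measure Ω))
      (nhdsWithin ηstar {ηstar}ᶜ) (nhds ⊤) := by
  rw [ENNReal.tendsto_nhds_top_iff_nat]
  intro n
  set x : ℝ := max x₀ (2 * m * (n + 1)) with hxdef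
  have hx : x₀ ≤ x := le_max_left _ _
  have hx2 : 2 * m * (n + 1) ≤ x := le_max_right _ _
  have hxpos : 0 < x := lt_of_lt_of_le hx₀ hx
  have hhalf : (0:ℝ) < 1 / (2 * m) := by positivity
  have hev := (htrunc x hx).eventually_lt_const hhalf
  filter_upwards [hev] with η hη
  set s := {ω : Ω | S η ω ≤ x} with hs
  have hsm : MeasurableSet s := measurableSet_le (hmeas η) measurable_const
  have hcompl : ∫ ω in sᶜ, S η ω ∂ℙ = 1 / m - ∫ ω in s, S η ω ∂ℙ := by
    have h := integral_add_compl hsm (hint η)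
    rw [hmean η] at h; linarith
  have hlower : 1 / (2 * m) < ∫ ω in sᶜ, S η ω ∂ℙ := by
    have heq : 1 / m - 1 / (2 * m) = 1 / (2 * m) := by field_simp; ring
    rw [hcompl]; linarith
  have key : ENNReal.ofReal (x * ∫ ω in sᶜ, S η ω ∂ℙ)
      ≤ ∫⁻ ω, ENNReal.ofReal ((S η ω) ^ 2) ∂ℙ := by
    have hg_int : Integrable (sᶜ.indicator (fun ω => x * S η ω)) ℙ :=
      ((hint η).const_mul x).indicator hsm.compl
    have h1 : ∫ ω, sᶜ.indicator (fun ω => x * S η ω) ω ∂ℙ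
        = x * ∫ ω in sᶜ, S η ω ∂ℙ := by
      rw [integral_indicator hsm.compl, integral_const_mul]
    rw [← h1, ofReal_integral_eq_lintegral_ofReal hg_int ?_]
    · apply lintegral_mono
      intro ω
      apply ENNReal.ofReal_le_ofReal
      by_cases hω : ω ∈ sᶜ
      · rw [Set.indicator_of_mem hω]
        have hS : x < S η ω := by
          simpa [hs, Set.mem_compl_iff, not_le] using hω
        nlinarith [hnonneg η ω]
      · rw [Set.indicator_of_notMem hω]; positivity
    · filter_upwards with ω
      exact Set.indicator_nonneg (fun ω' _ => mul_nonneg hxpos.le (hnonneg η ω')) ω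
  refine lt_of_lt_of_le ?_ key
  have hI : (n:ℝ) < x * ∫ ω in sᶜ, S η ω ∂ℙ := by
    have h1 : (n:ℝ) + 1 ≤ x * (1 / (2 * m)) := by
      rw [mul_one_div, le_div_iff₀ (by positivity : (0:ℝ) < 2 * m)]
      nlinarith
    nlinarith [hlower, hxpos]
  calc (n : ENNReal) = ENNReal.ofReal (n:ℝ) := by simp
    _ < ENNReal.ofReal (x * ∫ ω in sᶜ, S η ω ∂ℙ) :=
        (ENNReal.ofReal_lt_ofReal_iff (lt_of_le_of_lt (Nat.cast_nonneg n) hI)).mpr hI
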